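/- In the strong product G ⊠ H of two edge-coloured graphs with the inherited colouring (edges {(u,v),(u',v')} coloured by {v,v'} in H when u = u', otherwise by {u,u'} in G), for any vertex (u,v) and colour j: e_j[(u,v)] = e_j^H[v]·(1 + deg^G(u)) + e_j^G[u]·(1 + deg^H(v) + 2·Σ_{i=1}^k e_i^H[v]), where e_j[·] counts colour-j edges in the induced closed neighbourhood. -/

import Mathlib

/-- The strong product of two simple graphs. -/
def strongProd {V W : Type*} (G : SimpleGraph V) (H : SimpleGraph W) :
    SimpleGraph (V × W) where
  Adj p q := (p.1 = q.1 ∧ H.Adj p.2 q.2) ∨ (p.2 = q.2 ∧ G.Adj p.1 q.1) ∨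
    (G.Adj p.1 q.1 ∧ H.Adj p.2 q.2)
  symm := by
    constructor
    rintro p q (⟨h1, h2⟩ | ⟨h1, h2⟩ | ⟨h1, h2⟩)
    · exact Or.inl ⟨h1.symm, h2.symm⟩
    · exact Or.inr (Or.inl ⟨h1.symm, h2.symm⟩)
    · exact Or.inr (Or.inr ⟨h1.symm, h2.symm⟩)
  loopless := by
    constructor
    rintro p (⟨_, h⟩ | ⟨_, h⟩ | ⟨h, _⟩)
    · exact H.irrefl h
    · exact G.irrefl h
    · exact G.irrefl h

/-- The number of colour-`j` edges of `G` in the subgraph induced by the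
closed neighbourhood of `u`. -/
noncomputable def ejClosed {V : Type*} (G : SimpleGraph V) (col : Sym2 V → ℕ)
    (j : ℕ) (u : V) : ℕ :=
  {e : Sym2 V | e ∈ G.edgeSet ∧ (∀ x ∈ e, x ∈ insert u (G.neighborSet u)) ∧
    col e = j}.ncard

open Finset in
open scoped Classical in
private lemma two_mul_ejClosed {V : Type*} [Fintype V] (G : SimpleGraph V)
    (col : Sym2 V → ℕ) (j : ℕ) (u : V) :
    2 * ejClosed G col j u =
      Finset.card (univ.filter fun p : V × V => G.Adj p.1 p.2 ∧
        p.1 ∈ insert u (G.neighborSet u) ∧ p.2 ∈ insert u (G.neighborSet u) ∧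
        col s(p.1, p.2) = j) := by
  classical
  let G' : SimpleGraph V :=
    { Adj := fun x y => G.Adj x y ∧ x ∈ insert u (G.neighborSet u) ∧
        y ∈ insert u (G.neighborSet u) ∧ col s(x, y) = j
      symm := by
        constructor
        rintro x y ⟨h1, h2, h3, h4⟩
        exact ⟨h1.symm, h3, h2, by rwa [Sym2.eq_swap]⟩
      loopless := ⟨fun x h => G.irrefl h.1⟩ }
  have hset : {e : Sym2 V | e ∈ G.edgeSet ∧ (∀ x ∈ e, x ∈ insert u (G.neighborSet u)) ∧
      col e = j} = G'.edgeSet := by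
    ext e
    induction e using Sym2.ind with
    | _ x y =>
      simp only [Set.mem_setOf_eq, SimpleGraph.mem_edgeSet, Sym2.mem_iff, G']
      constructor
      · rintro ⟨h1, h2, h3⟩
        exact ⟨h1, h2 x (Or.inl rfl), h2 y (Or.inr rfl), h3⟩
      · rintro ⟨h1, h2, h3, h4⟩
        refine ⟨h1, ?_, h4⟩
        rintro z (rfl | rfl) <;> assumption
  have hcard : ejClosed G col j u = G'.edgeFinset.card := by
    rw [ejClosed, hset, SimpleGraph.edgeFinset, ← Set.ncard_eq_toFinset_card']
  rw [hcard, SimpleGraph.two_mul_card_edgeFinset]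

theorem stmt_11 {V W : Type*} [Fintype V] [Fintype W] [DecidableEq V]
    (G : SimpleGraph V) (H : SimpleGraph W) (k : ℕ)
    (colG : Sym2 V → ℕ) (colH : Sym2 W → ℕ) (colP : Sym2 (V × W) → ℕ)
    (hkG : ∀ e ∈ G.edgeSet, colG e ∈ Finset.Icc 1 k)
    (hkH : ∀ e ∈ H.edgeSet, colH e ∈ Finset.Icc 1 k)
    (hcolP : ∀ p q : V × W,
      colP s(p, q) = if p.1 = q.1 then colH s(p.2, q.2) else colG s(p.1, q.1))
    (j : ℕ) (u : V) (v : W) :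
    ejClosed (strongProd G H) colP j (u, v) =
      ejClosed H colH j v * (1 + (G.neighborSet u).ncard) +
        ejClosed G colG j u *
          (1 + (H.neighborSet v).ncard + 2 * ∑ i ∈ Finset.Icc 1 k, ejClosed H colH i v) := by
  classical
  set P := strongProd G H with hP
  set Nu : Set V := insert u (G.neighborSet u) with hNu
  set Nv : Set W := insert v (H.neighborSet v) with hNv
  have hmem : ∀ (a : V) (b : W),
      ((a, b) ∈ insert (u, v) (P.neighborSet (u, v))) ↔ (a ∈ Nu ∧ b ∈ Nv) := by
    intro a b
    simp only [Set.mem_insert_iff, SimpleGraph.mem_neighborSet, hP, strongProd, Prod.mk.injEq,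
      hNu, hNv]
    constructor
    · rintro (⟨rfl, rfl⟩ | ⟨rfl, h⟩ | ⟨rfl, h⟩ | ⟨h1, h2⟩)
      · exact ⟨Or.inl rfl, Or.inl rfl⟩
      · exact ⟨Or.inl rfl, Or.inr h⟩
      · exact ⟨Or.inr h, Or.inl rfl⟩
      · exact ⟨Or.inr h1, Or.inr h2⟩
    · rintro ⟨(rfl | h1), (rfl | h2)⟩
      · exact Or.inl ⟨rfl, rfl⟩
      · exact Or.inr (Or.inl ⟨rfl, h2⟩)
      · exact Or.inr (Or.inr (Or.inl ⟨rfl, h1⟩))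
      · exact Or.inr (Or.inr (Or.inr ⟨h1, h2⟩))
  obtain ⟨A, hA, hAmem⟩ : ∃ A : Finset ((V × W) × (V × W)),
      2 * ejClosed P colP j (u, v) = A.card ∧
      ∀ x : (V × W) × (V × W), x ∈ A ↔ (P.Adj x.1 x.2 ∧
        x.1 ∈ insert (u, v) (P.neighborSet (u, v)) ∧
        x.2 ∈ insert (u, v) (P.neighborSet (u, v)) ∧ colP s(x.1, x.2) = j) :=
    ⟨_, two_mul_ejClosed P colP j (u, v), fun x => by simp⟩
  have hDHex : ∀ i : ℕ, ∃ D : Finset (W × W), 2 * ejClosed H colH i v = D.card ∧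
      ∀ p : W × W, p ∈ D ↔ (H.Adj p.1 p.2 ∧ p.1 ∈ Nv ∧ p.2 ∈ Nv ∧ colH s(p.1, p.2) = i) :=
    fun i => ⟨_, two_mul_ejClosed H colH i v, fun p => by simp [hNv]⟩
  choose DH hDH hDHmem using hDHex
  obtain ⟨DG, hDG, hDGmem⟩ : ∃ D : Finset (V × V), 2 * ejClosed G colG j u = D.card ∧
      ∀ p : V × V, p ∈ D ↔ (G.Adj p.1 p.2 ∧ p.1 ∈ Nu ∧ p.2 ∈ Nu ∧ colG s(p.1, p.2) = j) :=
    ⟨_, two_mul_ejClosed G colG j u, fun p => by simp [hNu]⟩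
  set NuF : Finset V := Nu.toFinset with hNuF
  set NvF : Finset W := Nv.toFinset with hNvF
  set B : Finset (W × W) :=
    Finset.univ.filter (fun p : W × W => (p.1 = p.2 ∨ H.Adj p.1 p.2) ∧ p.1 ∈ Nv ∧ p.2 ∈ Nv)
    with hB
  have hBmem : ∀ p : W × W, p ∈ B ↔ ((p.1 = p.2 ∨ H.Adj p.1 p.2) ∧ p.1 ∈ Nv ∧ p.2 ∈ Nv) := by
    intro p; simp [hB]
  -- split A
  have hsplit : A.card = Finset.card (A.filter fun x => x.1.1 = x.2.1) +
      Finset.card (A.filter fun x => ¬ x.1.1 = x.2.1) :=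
    (Finset.card_filter_add_card_filter_not _).symm
  -- the part with equal first coordinates
  have h1 : Finset.card (A.filter fun x => x.1.1 = x.2.1) = NuF.card * Finset.card (DH j) := by
    rw [← Finset.card_product]
    apply Finset.card_nbij' (fun x => (x.1.1, (x.1.2, x.2.2)))
      (fun y => ((y.1, y.2.1), (y.1, y.2.2)))
    · rintro ⟨⟨a, b⟩, ⟨a', b'⟩⟩ hx
      rw [Finset.mem_coe, Finset.mem_filter] at hx
      obtain ⟨hxA, heq⟩ := hx
      simp only at heq
      subst heq
      rw [hAmem] at hxA
      obtain ⟨hadj, hm1, hm2, hcol⟩ := hxA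
      rw [hmem] at hm1 hm2
      have hH : H.Adj b b' := by
        rcases hadj with ⟨-, h⟩ | ⟨-, h⟩ | ⟨h, -⟩ <;> [exact h; exact absurd h (G.irrefl); exact absurd h (G.irrefl)]
      rw [Finset.mem_coe, Finset.mem_product]
      refine ⟨by simpa [hNuF] using hm1.1, ?_⟩
      rw [hDHmem]
      refine ⟨hH, hm1.2, hm2.2, ?_⟩
      rw [hcolP ⟨a, b⟩ ⟨a, b'⟩] at hcol
      simpa using hcol
    · rintro ⟨a, b, b'⟩ hy
      rw [Finset.mem_coe, Finset.mem_product] at hy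
      obtain ⟨ha, hbb⟩ := hy
      rw [hDHmem] at hbb
      obtain ⟨hH, hb, hb', hcol⟩ := hbb
      have haNu : a ∈ Nu := by simpa [hNuF] using ha
      rw [Finset.mem_coe, Finset.mem_filter, hAmem]
      refine ⟨⟨Or.inl ⟨rfl, hH⟩, (hmem a b).2 ⟨haNu, hb⟩, (hmem a b').2 ⟨haNu, hb'⟩, ?_⟩, rfl⟩
      rw [hcolP ⟨a, b⟩ ⟨a, b'⟩]
      simpa using hcol
    · rintro ⟨⟨a, b⟩, ⟨a', b'⟩⟩ hx
      rw [Finset.mem_coe, Finset.mem_filter] at hx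
      obtain ⟨-, heq⟩ := hx
      simp only at heq
      subst heq
      rfl
    · rintro ⟨a, b, b'⟩ -
      rfl
  -- the part with distinct first coordinates
  have h2 : Finset.card (A.filter fun x => ¬ x.1.1 = x.2.1) = DG.card * B.card := by
    rw [← Finset.card_product]
    apply Finset.card_nbij' (fun x => ((x.1.1, x.2.1), (x.1.2, x.2.2)))
      (fun y => ((y.1.1, y.2.1), (y.1.2, y.2.2)))
    · rintro ⟨⟨a, b⟩, ⟨a', b'⟩⟩ hx
      rw [Finset.mem_coe, Finset.mem_filter] at hx
      obtain ⟨hxA, hne⟩ := hx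
      simp only at hne
      rw [hAmem] at hxA
      obtain ⟨hadj, hm1, hm2, hcol⟩ := hxA
      rw [hmem] at hm1 hm2
      have hGadj : G.Adj a a' ∧ (b = b' ∨ H.Adj b b') := by
        rcases hadj with ⟨h, -⟩ | ⟨h1, h2⟩ | ⟨h1, h2⟩
        · exact absurd h hne
        · exact ⟨h2, Or.inl h1⟩
        · exact ⟨h1, Or.inr h2⟩
      rw [Finset.mem_coe, Finset.mem_product, hDGmem, hBmem]
      refine ⟨⟨hGadj.1, hm1.1, hm2.1, ?_⟩, hGadj.2, hm1.2, hm2.2⟩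
      rw [hcolP ⟨a, b⟩ ⟨a', b'⟩] at hcol
      simpa [hne] using hcol
    · intro y hy
      rw [Finset.mem_coe, Finset.mem_product, hDGmem, hBmem] at hy
      obtain ⟨⟨hGadj, ha, ha', hcol⟩, hor, hb, hb'⟩ := hy
      have hne : ¬ (y.1.1 = y.1.2) := hGadj.ne
      rw [Finset.mem_coe, Finset.mem_filter, hAmem]
      refine ⟨⟨?_, (hmem y.1.1 y.2.1).2 ⟨ha, hb⟩, (hmem y.1.2 y.2.2).2 ⟨ha', hb'⟩, ?_⟩, hne⟩
      · rcases hor with heq | hH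
        · exact Or.inr (Or.inl ⟨heq, hGadj⟩)
        · exact Or.inr (Or.inr ⟨hGadj, hH⟩)
      · rw [hcolP ⟨y.1.1, y.2.1⟩ ⟨y.1.2, y.2.2⟩]
        simpa [hne] using hcol
    · rintro ⟨⟨a, b⟩, ⟨a', b'⟩⟩ -
      rfl
    · rintro ⟨⟨a, a'⟩, ⟨b, b'⟩⟩ -
      rfl
  -- counting B
  have hBsplit : B.card = Finset.card (B.filter fun p => p.1 = p.2) + Finset.card (B.filter fun p => ¬ p.1 = p.2) :=
    (Finset.card_filter_add_card_filter_not _).symm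
  have hBd : Finset.card (B.filter fun p => p.1 = p.2) = NvF.card := by
    apply Finset.card_nbij' (fun p => p.1) (fun b => (b, b))
    · rintro ⟨b, b'⟩ hx
      rw [Finset.mem_coe, Finset.mem_filter, hBmem] at hx
      simpa [hNvF] using hx.1.2.1
    · intro b hb
      rw [Finset.mem_coe, Finset.mem_filter, hBmem]
      have : b ∈ Nv := by simpa [hNvF] using hb
      exact ⟨⟨Or.inl rfl, this, this⟩, rfl⟩
    · rintro ⟨b, b'⟩ hx
      rw [Finset.mem_coe, Finset.mem_filter] at hx
      obtain ⟨-, heq⟩ := hx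
      simp only at heq
      subst heq
      rfl
    · intro b _
      rfl
  have hBa : Finset.card (B.filter fun p => ¬ p.1 = p.2) = ∑ i ∈ Finset.Icc 1 k, Finset.card (DH i) := by
    rw [Finset.card_eq_sum_card_fiberwise
      (f := fun p : W × W => colH s(p.1, p.2)) (t := Finset.Icc 1 k) ?_]
    · apply Finset.sum_congr rfl
      intro i _
      congr 1
      ext ⟨b, b'⟩
      rw [Finset.mem_filter, Finset.mem_filter, hBmem, hDHmem]
      constructor
      · rintro ⟨⟨⟨(hor | hH), hb, hb'⟩, hne⟩, hcol⟩
        · exact absurd hor hne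
        · exact ⟨hH, hb, hb', hcol⟩
      · rintro ⟨hH, hb, hb', hcol⟩
        exact ⟨⟨⟨Or.inr hH, hb, hb'⟩, hH.ne⟩, hcol⟩
    · rintro ⟨b, b'⟩ hx
      rw [Finset.mem_coe, Finset.mem_filter, hBmem] at hx
      obtain ⟨⟨(hor | hH), -, -⟩, hne⟩ := hx
      · exact absurd hor hne
      · exact hkH _ (H.mem_edgeSet.2 hH)
  -- cardinalities of closed neighbourhoods
  have hNuc : NuF.card = (G.neighborSet u).ncard + 1 := by
    rw [hNuF, ← Set.ncard_eq_toFinset_card', hNu,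
      Set.ncard_insert_of_notMem (by simp [SimpleGraph.mem_neighborSet])]
  have hNvc : NvF.card = (H.neighborSet v).ncard + 1 := by
    rw [hNvF, ← Set.ncard_eq_toFinset_card', hNv,
      Set.ncard_insert_of_notMem (by simp [SimpleGraph.mem_neighborSet])]
  -- put everything together
  have key : 2 * ejClosed P colP j (u, v) =
      2 * (ejClosed H colH j v * (1 + (G.neighborSet u).ncard) +
        ejClosed G colG j u *
          (1 + (H.neighborSet v).ncard + 2 * ∑ i ∈ Finset.Icc 1 k, ejClosed H colH i v)) := by
    rw [hA, hsplit, h1, h2, hBsplit, hBd, hBa, hNuc, hNvc, ← hDH j, ← hDG]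
    have hsum : ∑ i ∈ Finset.Icc 1 k, Finset.card (DH i) =
        2 * ∑ i ∈ Finset.Icc 1 k, ejClosed H colH i v := by
      rw [Finset.mul_sum]
      exact Finset.sum_congr rfl fun i _ => (hDH i).symm
    rw [hsum]
    ring
  exact Nat.eq_of_mul_eq_mul_left (by norm_num) key
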